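/- arXiv:2209.07773 — 5 statements merged into one kernel-verified Lean document; each statement's English description precedes it below -/
import Mathlib

section
/- Let l, b̂ ∈ ℝ and let a, q, s, u, γ, w : ℝ → ℝ be functions such that at a point t the functions a, q, s are differentiable with a′(t) = q(t) + b̂·u(t), q′(t) = w(t), and s′(t) = −l·s(t) − l²·a(t) − l·b̂·γ(t). Define q̂ := s + l·a, the observation error e₁ := q − q̂, and the sampling error ψ := γ − u. Then e₁ is differentiable at t and e₁′(t) = −l·e₁(t) + l·b̂·ψ(t) + w(t). -/
/-- Observation-error dynamics of the extended state observer: if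
`a' = q + bhat·u`, `q' = w`, `s' = -l·s - l²·a - l·bhat·γ` at `t`, then the
observation error `e₁ = q - (s + l·a)` satisfies
`e₁' = -l·e₁ + l·bhat·ψ + w` at `t`, where `ψ = γ - u`. -/
theorem stmt_0 (l bhat : ℝ) (a q s u γ w : ℝ → ℝ) (t : ℝ)
    (ha : HasDerivAt a (q t + bhat * u t) t)
    (hq : HasDerivAt q (w t) t)
    (hs : HasDerivAt s (-l * s t - l ^ 2 * a t - l * bhat * γ t) t) :
    HasDerivAt (fun τ => q τ - (s τ + l * a τ))
      (-l * (q t - (s t + l * a t)) + l * bhat * (γ t - u t) + w t) t := by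
  have h := hq.sub (hs.add ((ha.const_mul l)))
  exact h.congr_deriv (by ring)
end

section
/- Let λ > 0 and c ≥ 0, and let f : ℝ → ℝ be differentiable on [0, ∞) with f(t)·f′(t) ≤ −λ·f(t)² + c·|f(t)| for all t ≥ 0. Then for all t ≥ 0, |f(t)| ≤ (|f(0)| − c/λ)·e^{−λt} + c/λ. -/
open Set Filter Topology

/-- Scalar comparison lemma: if `f·f' ≤ -λ·f² + c·|f|` on `[0, ∞)`, then
`|f(t)| ≤ (|f(0)| - c/λ)·e^{-λt} + c/λ` for all `t ≥ 0`. -/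
theorem stmt_2 (lam c : ℝ) (hlam : 0 < lam) (hc : 0 ≤ c) (f f' : ℝ → ℝ)
    (hderiv : ∀ t ∈ Set.Ici (0 : ℝ), HasDerivWithinAt f (f' t) (Set.Ici 0) t)
    (hineq : ∀ t ≥ (0 : ℝ), f t * f' t ≤ -lam * (f t) ^ 2 + c * |f t|) :
    ∀ t ≥ (0 : ℝ), |f t| ≤ (|f 0| - c / lam) * Real.exp (-lam * t) + c / lam := by
  set α : ℝ := |f 0| - c / lam with hαdef
  have key : ∀ ε > (0 : ℝ), ∀ t ≥ (0 : ℝ),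
      |f t| ≤ α * Real.exp (-lam * t) + c / lam + ε * (t + 1) := by
    intro ε hε t ht
    set B : ℝ → ℝ := fun x => α * Real.exp (-lam * x) + c / lam + ε * (x + 1) with hBdef
    set B' : ℝ → ℝ := fun x => -lam * α * Real.exp (-lam * x) + ε with hB'def
    have hBd : ∀ x, HasDerivAt B (B' x) x := by
      intro x
      have h1 : HasDerivAt (fun y : ℝ => -lam * y) (-lam) x := by
        simpa using (hasDerivAt_id x).const_mul (-lam)
      have h2 : HasDerivAt (fun y : ℝ => Real.exp (-lam * y))
          (Real.exp (-lam * x) * (-lam)) x := h1.exp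
      have h3 : HasDerivAt (fun y : ℝ => α * Real.exp (-lam * y))
          (α * (Real.exp (-lam * x) * (-lam))) x := h2.const_mul α
      have h4 : HasDerivAt (fun y : ℝ => ε * (y + 1)) (ε * 1) x :=
        ((hasDerivAt_id x).add_const 1).const_mul ε
      have := (h3.add_const (c / lam)).add h4
      refine this.congr_deriv ?_
      simp only [hB'def]; ring
    -- positivity of B on [0, ∞)
    have hBpos : ∀ x ≥ (0 : ℝ), 0 < B x := by
      intro x hx
      have hE0 : 0 < Real.exp (-lam * x) := Real.exp_pos _
      have hE1 : Real.exp (-lam * x) ≤ 1 := by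
        apply Real.exp_le_one_iff.2
        nlinarith
      have hcl : 0 ≤ c / lam := div_nonneg hc hlam.le
      have hα0 : 0 ≤ α + c / lam := by simp [hαdef]
      simp only [hBdef]
      rcases le_or_gt 0 α with hα | hα
      · nlinarith
      · nlinarith
    -- the slope function for |f|
    set φ : ℝ → ℝ := fun x => if f x = 0 then |f' x| else f x * f' x / |f x| with hφdef
    have hfc : ContinuousOn f (Icc 0 t) := fun x hx =>
      ((hderiv x hx.1).continuousWithinAt).mono (fun y hy => hy.1)
    have habs : ContinuousOn (fun x => |f x|) (Icc 0 t) := hfc.abs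
    -- initial condition
    have hinit : |f 0| ≤ B 0 := by
      have hcl : c / lam - c / lam = 0 := sub_self _
      simp only [hBdef, hαdef]
      rw [mul_zero, Real.exp_zero]
      nlinarith
    -- bound at contact points
    have hbound : ∀ x ∈ Ico (0 : ℝ) t, |f x| = B x → φ x < B' x := by
      intro x hx heq
      have hx0 : (0 : ℝ) ≤ x := hx.1
      have hBx : 0 < B x := hBpos x hx0
      have hfx : f x ≠ 0 := by
        intro h
        rw [h, abs_zero] at heq
        linarith [heq ▸ hBx]
      have habs0 : 0 < |f x| := abs_pos.2 hfx
      have hφx : φ x = f x * f' x / |f x| := by simp [hφdef, hfx]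
      have h1 : f x * f' x ≤ -lam * (f x) ^ 2 + c * |f x| := hineq x hx0
      have hsq : (f x) ^ 2 = |f x| ^ 2 := (sq_abs (f x)).symm
      have h2 : φ x ≤ -lam * |f x| + c := by
        rw [hφx, div_le_iff₀ habs0]
        nlinarith
      have h3 : -lam * |f x| + c < B' x := by
        rw [heq]
        simp only [hBdef, hB'def]
        have hE0 : 0 < Real.exp (-lam * x) := Real.exp_pos _
        have hcl : lam * (c / lam) = c := by field_simp
        have hp1 : 0 < lam * ε := mul_pos hlam hε
        have hp2 : 0 ≤ lam * ε * x := mul_nonneg hp1.le hx0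
        nlinarith
      exact lt_of_le_of_lt h2 h3
    -- slope condition
    have hslope : ∀ x ∈ Ico (0 : ℝ) t, ∀ r, φ x < r →
        ∃ᶠ z in 𝓝[>] x, slope (fun y => |f y|) x z < r := by
      intro x hx r hr
      have hx0 : (0 : ℝ) ≤ x := hx.1
      have hd : HasDerivWithinAt f (f' x) (Ici x) x :=
        (hderiv x hx0).mono (Ici_subset_Ici.2 hx0)
      by_cases hfx : f x = 0
      · -- f x = 0 : use |slope f| → |f' x|
        have hφx : φ x = |f' x| := by simp [hφdef, hfx]
        rw [hφx] at hr
        have hslope : Tendsto (slope f x) (𝓝[>] x) (𝓝 (f' x)) :=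
          (hasDerivWithinAt_iff_tendsto_slope' (lt_irrefl x)).1 hd.Ioi_of_Ici
        have habs' : Tendsto (fun z => |slope f x z|) (𝓝[>] x) (𝓝 |f' x|) :=
          hslope.abs
        have hev : ∀ᶠ z in 𝓝[>] x, |slope f x z| < r :=
          habs' (IsOpen.mem_nhds isOpen_Iio hr)
        have hle : ∀ z ∈ Ioi x, slope (fun y => |f y|) x z ≤ |slope f x z| := by
          intro z hz
          have hzx : 0 < z - x := sub_pos.2 hz
          rw [slope_def_field, slope_def_field, abs_div, abs_of_pos hzx]
          gcongr
          exact abs_sub_abs_le_abs_sub _ _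
        have : ∀ᶠ z in 𝓝[>] x, slope (fun y => |f y|) x z < r := by
          filter_upwards [hev, self_mem_nhdsWithin] with z h1 h2
          exact lt_of_le_of_lt (hle z h2) h1
        exact this.frequently
      · -- f x ≠ 0 : |f| is differentiable at x
        have habs0 : 0 < |f x| := abs_pos.2 hfx
        have hφx : φ x = f x * f' x / |f x| := by simp [hφdef, hfx]
        have hda : HasDerivWithinAt (fun y => |f y|) (φ x) (Ici x) x := by
          rcases lt_or_gt_of_ne hfx with hneg | hpos
          · -- f x < 0
            have hev : ∀ᶠ y in 𝓝[Ici x] x, f y < 0 :=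
              hd.continuousWithinAt (IsOpen.mem_nhds isOpen_Iio hneg)
            have heq : (fun y => |f y|) =ᶠ[𝓝[Ici x] x] fun y => -f y := by
              filter_upwards [hev] with y hy
              exact abs_of_neg hy
            have h1 : HasDerivWithinAt (fun y => -f y) (-f' x) (Ici x) x := hd.neg
            have h2 := h1.congr_of_eventuallyEq heq (abs_of_neg hneg)
            refine h2.congr_deriv ?_
            rw [hφx, abs_of_neg hneg, div_neg, mul_comm, mul_div_assoc, div_self hfx,
              mul_one]
          · -- f x > 0
            have hev : ∀ᶠ y in 𝓝[Ici x] x, 0 < f y :=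
              hd.continuousWithinAt (IsOpen.mem_nhds isOpen_Ioi hpos)
            have heq : (fun y => |f y|) =ᶠ[𝓝[Ici x] x] f := by
              filter_upwards [hev] with y hy
              exact abs_of_pos hy
            have h2 := hd.congr_of_eventuallyEq heq (abs_of_pos hpos)
            refine h2.congr_deriv ?_
            rw [hφx, abs_of_pos hpos, mul_comm, mul_div_assoc, div_self hfx, mul_one]
        exact hda.liminf_right_slope_le hr
    exact image_le_of_liminf_slope_right_lt_deriv_boundary habs hslope hinit hBd hbound
      ⟨ht, le_refl t⟩
  intro t ht
  by_contra hcon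
  push_neg at hcon
  set δ := |f t| - (α * Real.exp (-lam * t) + c / lam) with hδdef
  have hδ : 0 < δ := by simp only [hδdef]; linarith
  have h1 : (0 : ℝ) < t + 1 := by linarith
  have := key (δ / (2 * (t + 1))) (by positivity) t ht
  have h2 : δ / (2 * (t + 1)) * (t + 1) = δ / 2 := by field_simp
  rw [h2] at this
  simp only [hδdef] at this
  linarith
end

section
/- Let l, b̂, c₁, c₂, c̄, ē be real numbers with b̂ > 0, c₁ ≥ 0, c₂ ≥ 0, 0 ≤ c̄ < 1, ē > 0, and l > (c₁ + c₂·ē)/((1 − c̄)·ē). Set M := (ē·(l − c₂ − c̄·l) − c₁)/(l·b̂·(1 + c̄)). Let e₁, ψ, w : ℝ → ℝ with e₁ differentiable on [0, ∞), e₁′(t) = −l·e₁(t) + l·b̂·ψ(t) + w(t), |w(t)| ≤ c₁ + c₂·|e₁(t)| + c̄·l·|e₁(t)| + c̄·l·b̂·|ψ(t)|, and |ψ(t)| ≤ M for all t ≥ 0. If |e₁(0)| ≤ ē, then |e₁(t)| ≤ ē for all t ≥ 0. -/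
/-- Core of Lemma 1: boundedness of the ESO observation error under the
event-triggered mechanism. -/
theorem stmt_3 (l bhat c₁ c₂ cbar ebar : ℝ) (hb : 0 < bhat) (hc₁ : 0 ≤ c₁) (hc₂ : 0 ≤ c₂)
    (hcbar0 : 0 ≤ cbar) (hcbar1 : cbar < 1) (hebar : 0 < ebar)
    (hl : (c₁ + c₂ * ebar) / ((1 - cbar) * ebar) < l)
    (e₁ ψ w : ℝ → ℝ)
    (hderiv : ∀ t ∈ Set.Ici (0 : ℝ),
      HasDerivWithinAt e₁ (-l * e₁ t + l * bhat * ψ t + w t) (Set.Ici 0) t)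
    (hw : ∀ t ≥ (0 : ℝ),
      |w t| ≤ c₁ + c₂ * |e₁ t| + cbar * l * |e₁ t| + cbar * l * bhat * |ψ t|)
    (hψ : ∀ t ≥ (0 : ℝ),
      |ψ t| ≤ (ebar * (l - c₂ - cbar * l) - c₁) / (l * bhat * (1 + cbar)))
    (h0 : |e₁ 0| ≤ ebar) :
    ∀ t ≥ (0 : ℝ), |e₁ t| ≤ ebar := by
  intro t ht
  set Mv : ℝ := (ebar * (l - c₂ - cbar * l) - c₁) / (l * bhat * (1 + cbar)) with hMv
  -- l is positive
  have hden : (0 : ℝ) < (1 - cbar) * ebar := by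
    have : (0 : ℝ) < 1 - cbar := by linarith
    positivity
  have hl0 : 0 < l :=
    lt_of_le_of_lt (div_nonneg (by positivity) hden.le) hl
  have h1 : c₁ + c₂ * ebar < l * ((1 - cbar) * ebar) := (div_lt_iff₀ hden).mp hl
  have hKneg : c₂ + cbar * l - l < 0 := by nlinarith
  have hDpos : (0 : ℝ) < l * bhat * (1 + cbar) := by positivity
  have key : c₁ + (1 + cbar) * (l * bhat) * Mv = ebar * (l - c₂ - cbar * l) := by
    rw [hMv]; field_simp; ring
  -- continuity and one-sided derivatives on [0, t]
  have hcont : ContinuousOn e₁ (Set.Icc 0 t) := fun x hx =>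
    ((hderiv x hx.1).continuousWithinAt).mono (fun y hy => hy.1)
  have hder' : ∀ x ∈ Set.Ico (0 : ℝ) t,
      HasDerivWithinAt e₁ (-l * e₁ x + l * bhat * ψ x + w x) (Set.Ici x) x := fun x hx =>
    (hderiv x hx.1).mono (Set.Ici_subset_Ici.2 hx.1)
  -- main bound for every η > 0
  have main : ∀ η : ℝ, 0 < η → |e₁ t| ≤ ebar + η := by
    intro η hη
    have hB : ∀ x : ℝ, HasDerivAt (fun _ : ℝ => ebar + η) 0 x := fun x => hasDerivAt_const x _
    have core : ∀ x, 0 ≤ x → |e₁ x| = ebar + η →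
        |(-l * e₁ x + l * bhat * ψ x + w x) + l * e₁ x| < l * (ebar + η) := by
      intro x hx habs
      have hw' := hw x hx
      have hψ' := hψ x hx
      have h2 : l * bhat * |ψ x| ≤ l * bhat * Mv :=
        mul_le_mul_of_nonneg_left hψ' (by positivity)
      have h3 : cbar * (l * bhat * |ψ x|) ≤ cbar * (l * bhat * Mv) :=
        mul_le_mul_of_nonneg_left h2 hcbar0
      have h4 : |(-l * e₁ x + l * bhat * ψ x + w x) + l * e₁ x| ≤
          l * bhat * |ψ x| + |w x| := by
        have he : (-l * e₁ x + l * bhat * ψ x + w x) + l * e₁ x = l * bhat * ψ x + w x := by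
          ring
        rw [he]
        calc |l * bhat * ψ x + w x| ≤ |l * bhat * ψ x| + |w x| := abs_add_le _ _
          _ = l * bhat * |ψ x| + |w x| := by
              rw [abs_mul, abs_of_pos (by positivity : (0:ℝ) < l * bhat)]
      rw [habs] at hw'
      nlinarith [mul_pos (by linarith : (0:ℝ) < l - c₂ - cbar * l) hη]
    -- upper bound: e₁ x ≤ ebar + η
    have hup : ∀ x ∈ Set.Icc (0:ℝ) t, e₁ x ≤ ebar + η := by
      refine image_le_of_deriv_right_lt_deriv_boundary hcont hder' ?_ hB ?_
      · calc e₁ 0 ≤ |e₁ 0| := le_abs_self _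
          _ ≤ ebar := h0
          _ ≤ ebar + η := by linarith
      · intro x hx hbd
        have hbd2 : e₁ x = ebar + η := hbd
        have habs : |e₁ x| = ebar + η := by rw [hbd2, abs_of_pos (by linarith)]
        have hc := core x hx.1 habs
        have h5 := le_abs_self ((-l * e₁ x + l * bhat * ψ x + w x) + l * e₁ x)
        have h6 : l * e₁ x = l * (ebar + η) := by rw [hbd2]
        show -l * e₁ x + l * bhat * ψ x + w x < 0
        linarith
    -- lower bound: -e₁ x ≤ ebar + η
    have hlo : ∀ x ∈ Set.Icc (0:ℝ) t, -e₁ x ≤ ebar + η := by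
      refine image_le_of_deriv_right_lt_deriv_boundary
        (f := fun x => -e₁ x) (f' := fun x => -(-l * e₁ x + l * bhat * ψ x + w x))
        (hcont.neg) (fun x hx => (hder' x hx).neg) ?_ hB ?_
      · calc -e₁ 0 ≤ |e₁ 0| := neg_le_abs _
          _ ≤ ebar := h0
          _ ≤ ebar + η := by linarith
      · intro x hx hbd
        have hbd2 : -e₁ x = ebar + η := hbd
        have hbd3 : e₁ x = -(ebar + η) := by linarith
        have habs : |e₁ x| = ebar + η := by rw [hbd3, abs_neg, abs_of_pos (by linarith)]
        have hc := core x hx.1 habs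
        have h5 := neg_le_abs ((-l * e₁ x + l * bhat * ψ x + w x) + l * e₁ x)
        have h6 : l * e₁ x = -(l * (ebar + η)) := by rw [hbd3]; ring
        show -(-l * e₁ x + l * bhat * ψ x + w x) < 0
        linarith
    exact abs_le.2 ⟨by linarith [hlo t ⟨ht, le_refl t⟩], hup t ⟨ht, le_refl t⟩⟩
  exact le_of_forall_pos_le_add main
end

section
/- Let l, b̂, c₁, c₂, c̄, ē be real numbers with b̂ > 0, c₁ ≥ 0, c₂ ≥ 0, 0 ≤ c̄ < 1, ē > 0, and l > (c₁ + c₂·ē)/((1 − c̄)·ē). Set M := (ē·(l − c₂ − c̄·l) − c₁)/(l·b̂·(1 + c̄)). Let e₁, ψ, w : ℝ → ℝ with e₁ differentiable on [0, ∞), e₁′(t) = −l·e₁(t) + l·b̂·ψ(t) + w(t), |w(t)| ≤ c₁ + c₂·|e₁(t)| + c̄·l·|e₁(t)| + c̄·l·b̂·|ψ(t)|, and |ψ(t)| ≤ M for all t ≥ 0. Then for all t ≥ 0, |e₁(t)| ≤ (|e₁(0)| − ē)·e^{−(l − c₂ − c̄·l)·t} + ē. -/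
open Set Filter Topology

set_option maxHeartbeats 1600000

/-- Explicit exponential bound (A.6) on the ESO observation error. -/
theorem stmt_4 (l bhat c₁ c₂ cbar ebar : ℝ) (hb : 0 < bhat) (hc₁ : 0 ≤ c₁) (hc₂ : 0 ≤ c₂)
    (hcbar0 : 0 ≤ cbar) (hcbar1 : cbar < 1) (hebar : 0 < ebar)
    (hl : (c₁ + c₂ * ebar) / ((1 - cbar) * ebar) < l)
    (e₁ ψ w : ℝ → ℝ)
    (hderiv : ∀ t ∈ Set.Ici (0 : ℝ),
      HasDerivWithinAt e₁ (-l * e₁ t + l * bhat * ψ t + w t) (Set.Ici 0) t)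
    (hw : ∀ t ≥ (0 : ℝ),
      |w t| ≤ c₁ + c₂ * |e₁ t| + cbar * l * |e₁ t| + cbar * l * bhat * |ψ t|)
    (hψ : ∀ t ≥ (0 : ℝ),
      |ψ t| ≤ (ebar * (l - c₂ - cbar * l) - c₁) / (l * bhat * (1 + cbar))) :
    ∀ t ≥ (0 : ℝ),
      |e₁ t| ≤ (|e₁ 0| - ebar) * Real.exp (-(l - c₂ - cbar * l) * t) + ebar := by
  set A : ℝ := l - c₂ - cbar * l with hAdef
  set M : ℝ := (ebar * A - c₁) / (l * bhat * (1 + cbar)) with hMdef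
  have h1c : 0 < 1 - cbar := by linarith
  have hden : 0 < (1 - cbar) * ebar := mul_pos h1c hebar
  have hl' : c₁ + c₂ * ebar < l * ((1 - cbar) * ebar) := by
    rw [div_lt_iff₀ hden] at hl; linarith [hl]
  have hl0 : 0 < l := by nlinarith
  have hA : 0 < A := by nlinarith
  have hlb : 0 < l * bhat * (1 + cbar) := by positivity
  have hMkey : (1 + cbar) * (l * bhat * M) + c₁ = A * ebar := by
    have : M * (l * bhat * (1 + cbar)) = ebar * A - c₁ := div_mul_cancel₀ _ hlb.ne'
    nlinarith [this]
  have hM0 : 0 ≤ l * bhat * M := by nlinarith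
  -- pointwise derivative value
  set d : ℝ → ℝ := fun x => -l * e₁ x + l * bhat * ψ x + w x with hddef
  -- key signed bounds on d
  have key : ∀ x ≥ (0:ℝ),
      (0 ≤ e₁ x → d x ≤ -A * |e₁ x| + A * ebar) ∧
      (e₁ x ≤ 0 → -(d x) ≤ -A * |e₁ x| + A * ebar) := by
    intro x hx
    have hwx := hw x hx
    have hψx := hψ x hx
    have hp1 : l * bhat * |ψ x| ≤ l * bhat * M :=
      mul_le_mul_of_nonneg_left hψx (by positivity)
    have hp2 : cbar * (l * bhat * |ψ x|) ≤ cbar * (l * bhat * M) :=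
      mul_le_mul_of_nonneg_left hp1 hcbar0
    have hψ1 : ψ x ≤ |ψ x| := le_abs_self _
    have hψ2 : -(ψ x) ≤ |ψ x| := neg_le_abs _
    have hw1 : w x ≤ |w x| := le_abs_self _
    have hw2 : -(w x) ≤ |w x| := neg_le_abs _
    have hlψ1 : l * bhat * ψ x ≤ l * bhat * |ψ x| :=
      mul_le_mul_of_nonneg_left hψ1 (by positivity)
    have hlψ2 : -(l * bhat * ψ x) ≤ l * bhat * |ψ x| := by
      have := mul_le_mul_of_nonneg_left hψ2 (le_of_lt (by positivity : (0:ℝ) < l * bhat))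
      linarith [this]
    constructor
    · intro he
      have habs : |e₁ x| = e₁ x := abs_of_nonneg he
      rw [habs] at hwx ⊢
      simp only [hddef]
      nlinarith [hwx, hlψ1, hw1, hp1, hp2, hMkey]
    · intro he
      have habs : |e₁ x| = -e₁ x := abs_of_nonpos he
      rw [habs] at hwx ⊢
      simp only [hddef]
      nlinarith [hwx, hlψ2, hw2, hp1, hp2, hMkey]
  -- slope bound for |e₁|
  have hslope : ∀ x ≥ (0:ℝ), ∀ r : ℝ, -A * |e₁ x| + A * ebar < r →
      ∃ᶠ z in 𝓝[>] x, slope (fun t => |e₁ t|) x z < r := by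
    intro x hx r hr
    have hsub : Ioi x ⊆ Ici (0:ℝ) := fun z hz => le_trans hx (le_of_lt hz)
    have hd : HasDerivWithinAt e₁ (d x) (Ioi x) x := (hderiv x hx).mono hsub
    have hts : Tendsto (slope e₁ x) (𝓝[>] x) (𝓝 (d x)) :=
      (hasDerivWithinAt_iff_tendsto_slope' (lt_irrefl x)).1 hd
    have hce : Tendsto e₁ (𝓝[>] x) (𝓝 (e₁ x)) :=
      ((hderiv x hx).continuousWithinAt).tendsto.mono_left (nhdsWithin_mono x hsub)
    rcases lt_trichotomy (e₁ x) 0 with hneg | hzero | hpos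
    · -- e₁ x < 0
      have hdF : -(d x) ≤ -A * |e₁ x| + A * ebar := (key x hx).2 hneg.le
      have h1 : ∀ᶠ z in 𝓝[>] x, e₁ z < 0 := hce.eventually (eventually_lt_nhds hneg)
      have h2 : ∀ᶠ z in 𝓝[>] x, -(slope e₁ x z) < r :=
        (hts.neg.eventually (eventually_lt_nhds (lt_of_le_of_lt hdF hr)))
      have h3 : ∀ᶠ z in 𝓝[>] x, x < z := eventually_mem_nhdsWithin
      refine ((h1.and (h2.and h3)).mono ?_).frequently
      rintro z ⟨hz1, hz2, hz3⟩
      have : slope (fun t => |e₁ t|) x z = -(slope e₁ x z) := by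
        rw [slope_def_field, slope_def_field, abs_of_nonpos hz1.le, abs_of_nonpos hneg.le]
        ring
      rw [this]; exact hz2
    · -- e₁ x = 0
      have hdF1 : d x ≤ -A * |e₁ x| + A * ebar := (key x hx).1 hzero.ge
      have hdF2 : -(d x) ≤ -A * |e₁ x| + A * ebar := (key x hx).2 hzero.le
      have habs : |d x| ≤ -A * |e₁ x| + A * ebar := abs_le.2 ⟨by linarith, hdF1⟩
      have h2 : ∀ᶠ z in 𝓝[>] x, |slope e₁ x z| < r :=
        (hts.abs.eventually (eventually_lt_nhds (lt_of_le_of_lt habs hr)))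
      have h3 : ∀ᶠ z in 𝓝[>] x, x < z := eventually_mem_nhdsWithin
      refine ((h2.and h3).mono ?_).frequently
      rintro z ⟨hz2, hz3⟩
      have hE : slope (fun t => |e₁ t|) x z = |e₁ z| / (z - x) := by
        rw [slope_def_field, hzero, abs_zero, sub_zero]
      have : slope (fun t => |e₁ t|) x z ≤ |slope e₁ x z| := by
        rw [hE, slope_def_field, hzero, sub_zero, abs_div, abs_of_pos (by linarith : 0 < z - x)]
      linarith
    · -- e₁ x > 0
      have hdF : d x ≤ -A * |e₁ x| + A * ebar := (key x hx).1 hpos.le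
      have h1 : ∀ᶠ z in 𝓝[>] x, 0 < e₁ z := hce.eventually (eventually_gt_nhds hpos)
      have h2 : ∀ᶠ z in 𝓝[>] x, slope e₁ x z < r :=
        (hts.eventually (eventually_lt_nhds (lt_of_le_of_lt hdF hr)))
      refine ((h1.and h2).mono ?_).frequently
      rintro z ⟨hz1, hz2⟩
      have : slope (fun t => |e₁ t|) x z = slope e₁ x z := by
        rw [slope_def_field, slope_def_field, abs_of_pos hz1, abs_of_pos hpos]
      rw [this]; exact hz2
  -- main comparison
  intro t ht
  have hneg : -(l - c₂ - cbar * l) = -A := by rw [hAdef]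
  refine le_of_forall_pos_le_add ?_
  intro ε hε
  set c : ℝ := |e₁ 0| - ebar with hcdef
  have hcont : ContinuousOn (fun s => |e₁ s|) (Icc 0 t) := by
    have : ContinuousOn e₁ (Icc 0 t) := fun x hx =>
      ((hderiv x hx.1).continuousWithinAt).mono (fun z hz => hz.1)
    exact this.abs
  have hBd : ∀ x : ℝ, HasDerivAt (fun s => c * Real.exp (-A * s) + ebar + ε)
      (c * (-A * Real.exp (-A * x))) x := by
    intro x
    have h1 : HasDerivAt (fun s : ℝ => -A * s) (-A) x := by
      simpa using (hasDerivAt_id x).const_mul (-A)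
    have h2 : HasDerivAt (fun s => Real.exp (-A * s)) (Real.exp (-A * x) * -A) x := h1.exp
    have h3 := (h2.const_mul c).add_const ebar
    have h4 := h3.add_const ε
    exact h4.congr_deriv (by ring)
  have main := image_le_of_liminf_slope_right_lt_deriv_boundary'
    (f := fun s => |e₁ s|) (f' := fun x => -A * |e₁ x| + A * ebar)
    (a := 0) (b := t)
    hcont
    (fun x hx r hr => hslope x hx.1 r hr)
    (B := fun s => c * Real.exp (-A * s) + ebar + ε)
    (B' := fun x => c * (-A * Real.exp (-A * x)))
    (by simp [hcdef]; linarith)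
    (fun x _ => (hBd x).continuousAt.continuousWithinAt)
    (fun x _ => (hBd x).hasDerivWithinAt)
    (by
      intro x _ hfB
      have hfB' : |e₁ x| = c * Real.exp (-A * x) + ebar + ε := hfB
      show -A * |e₁ x| + A * ebar < c * (-A * Real.exp (-A * x))
      rw [hfB']
      have hεA : 0 < A * ε := mul_pos hA hε
      nlinarith [hεA])
  have := main (Set.mem_Icc.2 ⟨ht, le_refl t⟩)
  rw [hneg]
  linarith [this]
end

section
/- Let l > 0, B > 0, M > 0 and t₀ < t₁ be real numbers. Let u : ℝ → ℝ be differentiable on [t₀, t₁] and set ψ(t) := u(t₀) − u(t). Assume |u′(t)| ≤ l·|ψ(t)| + B and |ψ(t)| ≤ M for all t ∈ [t₀, t₁], and |ψ(t₁)| ≥ M. Then t₁ − t₀ ≥ M/(l·M + B). -/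
/-- Exclusion of Zeno behavior: the inter-event time is bounded below by
`M/(lM + B)`. -/
theorem stmt_14 (l B M t₀ t₁ : ℝ) (hl : 0 < l) (hB : 0 < B) (hM : 0 < M)
    (ht : t₀ < t₁) (u u' : ℝ → ℝ)
    (hderiv : ∀ t ∈ Set.Icc t₀ t₁, HasDerivWithinAt u (u' t) (Set.Icc t₀ t₁) t)
    (hbound : ∀ t ∈ Set.Icc t₀ t₁, |u' t| ≤ l * |u t₀ - u t| + B)
    (hψ : ∀ t ∈ Set.Icc t₀ t₁, |u t₀ - u t| ≤ M)
    (hend : M ≤ |u t₀ - u t₁|) :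
    M / (l * M + B) ≤ t₁ - t₀ := by
  have hC : 0 < l * M + B := by positivity
  have hb : ∀ t ∈ Set.Icc t₀ t₁, ‖u' t‖ ≤ l * M + B := by
    intro t htm
    calc ‖u' t‖ ≤ l * |u t₀ - u t| + B := hbound t htm
    _ ≤ l * M + B := by nlinarith [hψ t htm]
  have key := Convex.norm_image_sub_le_of_norm_hasDerivWithin_le hderiv hb
    (convex_Icc t₀ t₁) (Set.left_mem_Icc.2 ht.le) (Set.right_mem_Icc.2 ht.le)
  rw [Real.norm_eq_abs, abs_sub_comm] at key
  rw [div_le_iff₀ hC]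
  calc M ≤ |u t₀ - u t₁| := hend
  _ ≤ (l * M + B) * |t₁ - t₀| := key
  _ = (t₁ - t₀) * (l * M + B) := by rw [abs_of_nonneg (by linarith)]; ring
end
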